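/- Let e ∈ S^d, α ∈ (0, 1/2], r ∈ (0,1), β ≥ 1, and let Λ ⊂ B(e,α) be (r,ρ)-separable (ρ(ω,ω') ≥ r for distinct ω, ω' ∈ Λ) with respect to the metric ρ(x,y) = (1/α)·√(d(x,y)² + α·(√(α-d(x,e)) - √(α-d(y,e)))²). Then max over x ∈ B(e,α) of #{ω ∈ Λ : ρ(ω,x) ≤ βr} is at most C·β^{d+2}, where C depends only on d. -/

import Mathlib

open RealInnerProductSpace

/-- The geodesic distance on the unit sphere of `EuclideanSpace ℝ (Fin (d+1))`. -/
noncomputable def geo {d : ℕ} (x y : EuclideanSpace ℝ (Fin (d+1))) : ℝ :=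
  Real.arccos ⟪x, y⟫

/-- The boundary-adapted metric on the spherical cap B(e,α). -/
noncomputable def rhoCap {d : ℕ} (e : EuclideanSpace ℝ (Fin (d+1))) (α : ℝ)
    (x y : EuclideanSpace ℝ (Fin (d+1))) : ℝ :=
  (1/α) * Real.sqrt ((geo x y)^2 +
    α * (Real.sqrt (α - geo x e) - Real.sqrt (α - geo y e))^2)

open MeasureTheory Metric Module ENNReal Real

/-- Volume-based packing bound: a δ-separated finite set inside a ball of radius R. -/
lemma packing_bound {E : Type*} [NormedAddCommGroup E] [NormedSpace ℝ E]
    [FiniteDimensional ℝ E] (s : Finset E) (c : E) {δ R : ℝ} (hδ : 0 < δ) (hR0 : 0 ≤ R)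
    (hmem : ∀ p ∈ s, dist p c ≤ R)
    (hsep : ∀ p ∈ s, ∀ q ∈ s, p ≠ q → δ ≤ dist p q) :
    (s.card : ℝ) * (δ/2)^(finrank ℝ E) ≤ (R + δ/2)^(finrank ℝ E) := by
  borelize E
  let μ : Measure E := Measure.addHaar
  have hR : 0 < R + δ/2 := by linarith
  set A := ⋃ p ∈ s, ball (p : E) (δ/2) with hA
  have D : Set.Pairwise (s : Set E) (Function.onFun Disjoint fun p => ball (p : E) (δ/2)) := by
    rintro p hp q hq hpq
    apply ball_disjoint_ball
    have := hsep p hp q hq hpq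
    linarith
  have A_subset : A ⊆ ball c (R + δ/2) := by
    refine Set.iUnion₂_subset fun p hp => ?_
    apply ball_subset_ball'
    have := hmem p hp; linarith
  have I :
      (s.card : ℝ≥0∞) * ENNReal.ofReal ((δ/2) ^ finrank ℝ E) * μ (ball 0 1) ≤
        ENNReal.ofReal ((R + δ/2) ^ finrank ℝ E) * μ (ball 0 1) := by
    calc
      (s.card : ℝ≥0∞) * ENNReal.ofReal ((δ/2) ^ finrank ℝ E) * μ (ball 0 1) = μ A := by
        rw [hA, measure_biUnion_finset D fun p _ => measurableSet_ball]
        have I : (0:ℝ) < δ/2 := by linarith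
        simp only [μ.addHaar_ball_of_pos _ I]
        simp only [Finset.sum_const, nsmul_eq_mul, mul_assoc]
      _ ≤ μ (ball c (R + δ/2)) := measure_mono A_subset
      _ = ENNReal.ofReal ((R + δ/2) ^ finrank ℝ E) * μ (ball 0 1) := by
        simp only [μ.addHaar_ball_of_pos _ hR]
  have J : (s.card : ℝ≥0∞) * ENNReal.ofReal ((δ/2) ^ finrank ℝ E) ≤
      ENNReal.ofReal ((R + δ/2) ^ finrank ℝ E) :=
    (ENNReal.mul_le_mul_iff_left (measure_ball_pos _ _ zero_lt_one).ne' measure_ball_lt_top.ne).1 I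
  rw [← ENNReal.ofReal_natCast, ← ENNReal.ofReal_mul (by positivity)] at J
  exact (ENNReal.ofReal_le_ofReal_iff (by positivity)).1 J

lemma geo_nonneg {d : ℕ} (x y : EuclideanSpace ℝ (Fin (d+1))) : 0 ≤ geo x y :=
  Real.arccos_nonneg _

lemma cos_geo {d : ℕ} {x y : EuclideanSpace ℝ (Fin (d+1))} (hx : ‖x‖ = 1) (hy : ‖y‖ = 1) :
    Real.cos (geo x y) = ⟪x, y⟫ := by
  have h := abs_real_inner_le_norm x y
  rw [hx, hy, mul_one] at h
  exact Real.cos_arccos (neg_le_of_abs_le h) (le_of_abs_le h)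

lemma dist_sq_geo {d : ℕ} {x y : EuclideanSpace ℝ (Fin (d+1))} (hx : ‖x‖ = 1) (hy : ‖y‖ = 1) :
    dist x y ^ 2 = 2 - 2 * Real.cos (geo x y) := by
  rw [cos_geo hx hy, dist_eq_norm, norm_sub_sq_real, hx, hy]; ring

lemma dist_le_geo {d : ℕ} {x y : EuclideanSpace ℝ (Fin (d+1))} (hx : ‖x‖ = 1) (hy : ‖y‖ = 1) :
    dist x y ≤ geo x y := by
  have h1 := Real.one_sub_sq_div_two_le_cos (x := geo x y)
  have h2 := dist_sq_geo hx hy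
  have h3 := dist_nonneg (x := x) (y := y)
  have h4 := geo_nonneg x y
  nlinarith

lemma geo_le_dist {d : ℕ} {x y : EuclideanSpace ℝ (Fin (d+1))} (hx : ‖x‖ = 1) (hy : ‖y‖ = 1) :
    geo x y ≤ π / 2 * dist x y := by
  have h1 := Real.cos_le_one_sub_mul_cos_sq (x := geo x y)
    (by rw [abs_of_nonneg (geo_nonneg x y)]; exact Real.arccos_le_pi _)
  have h2 := dist_sq_geo hx hy
  have h3 := dist_nonneg (x := x) (y := y)
  have h4 := geo_nonneg x y
  have hπ := Real.pi_pos
  have hπ2 : (0:ℝ) < π ^ 2 := by positivity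
  have h1' : π ^ 2 * Real.cos (geo x y) ≤ π ^ 2 - 2 * geo x y ^ 2 := by
    have h := mul_le_mul_of_nonneg_left h1 hπ2.le
    have h5 : π ^ 2 * (2 / π ^ 2 * geo x y ^ 2) = 2 * geo x y ^ 2 := by field_simp
    nlinarith [h, h5]
  have h2' : π ^ 2 * dist x y ^ 2 = 2 * π ^ 2 - 2 * (π ^ 2 * Real.cos (geo x y)) := by
    rw [h2]; ring
  have key : 4 * geo x y ^ 2 ≤ π ^ 2 * dist x y ^ 2 := by linarith
  nlinarith [key, mul_nonneg hπ.le h3, h4]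

/-- The lift of the cap into `EuclideanSpace ℝ (Fin (d+2))` using an extra coordinate `g`. -/
noncomputable def lift {d : ℕ} (g : EuclideanSpace ℝ (Fin (d+1)) → ℝ)
    (a : EuclideanSpace ℝ (Fin (d+1))) : EuclideanSpace ℝ (Fin (d+2)) :=
  (WithLp.equiv 2 (Fin (d+2) → ℝ)).symm
    (fun i => if h : (i : ℕ) < d + 1 then a ⟨i, h⟩ else g a)

lemma lift_apply_castSucc {d : ℕ} (g : EuclideanSpace ℝ (Fin (d+1)) → ℝ)
    (a : EuclideanSpace ℝ (Fin (d+1))) (i : Fin (d+1)) :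
    lift g a (Fin.castSucc i) = a i := by
  rw [lift, WithLp.equiv_symm_apply, PiLp.toLp_apply, dif_pos (by simp [i.isLt])]
  exact congrArg a (Fin.ext rfl)

lemma lift_apply_last {d : ℕ} (g : EuclideanSpace ℝ (Fin (d+1)) → ℝ)
    (a : EuclideanSpace ℝ (Fin (d+1))) :
    lift g a (Fin.last (d+1)) = g a := by
  rw [lift, WithLp.equiv_symm_apply, PiLp.toLp_apply, dif_neg (by simp)]

lemma dist_sq_pi {d : ℕ} (a b : EuclideanSpace ℝ (Fin (d+1))) :
    dist a b ^ 2 = ∑ i, (a i - b i) ^ 2 := by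
  rw [EuclideanSpace.dist_eq, Real.sq_sqrt (Finset.sum_nonneg fun i _ => sq_nonneg _)]
  simp [Real.dist_eq, sq_abs]

lemma lift_dist {d : ℕ} (g : EuclideanSpace ℝ (Fin (d+1)) → ℝ)
    (a b : EuclideanSpace ℝ (Fin (d+1))) :
    dist (lift g a) (lift g b) = Real.sqrt (dist a b ^ 2 + (g a - g b) ^ 2) := by
  rw [EuclideanSpace.dist_eq]
  congr 1
  rw [Fin.sum_univ_castSucc, dist_sq_pi]
  congr 1
  · exact Finset.sum_congr rfl fun i _ => by
      rw [lift_apply_castSucc, lift_apply_castSucc, Real.dist_eq, sq_abs]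
  · rw [lift_apply_last, lift_apply_last, Real.dist_eq, sq_abs]

lemma lift_dist_sq {d : ℕ} (g : EuclideanSpace ℝ (Fin (d+1)) → ℝ)
    (a b : EuclideanSpace ℝ (Fin (d+1))) :
    dist (lift g a) (lift g b) ^ 2 = dist a b ^ 2 + (g a - g b) ^ 2 := by
  rw [lift_dist, Real.sq_sqrt (by positivity)]

lemma le_of_sq_le_sq' {a b : ℝ} (ha : 0 ≤ a) (hb : 0 ≤ b) (h : a ^ 2 ≤ b ^ 2) : a ≤ b := by
  nlinarith

set_option maxHeartbeats 1000000 in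
/-- Bounded overlap: an (r,ρ)-separable subset of the cap B(e,α) has at most
C·β^{d+2} points in any ρ-ball of radius βr, with C depending only on d. -/
theorem stmt_12 (d : ℕ) (hd : 1 ≤ d) :
    ∃ C : ℝ, 0 < C ∧
    ∀ (e : EuclideanSpace ℝ (Fin (d+1))) (α r β : ℝ)
      (Λ : Finset (EuclideanSpace ℝ (Fin (d+1)))),
      ‖e‖ = 1 → 0 < α → α ≤ 1/2 → 0 < r → r < 1 → 1 ≤ β →
      (∀ ω ∈ Λ, ‖ω‖ = 1 ∧ geo ω e ≤ α) →
      (∀ ω ∈ Λ, ∀ ω' ∈ Λ, ω ≠ ω' → r ≤ rhoCap e α ω ω') →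
      ∀ x : EuclideanSpace ℝ (Fin (d+1)), ‖x‖ = 1 → geo x e ≤ α →
        ((Λ.filter (fun ω => rhoCap e α ω x ≤ β * r)).card : ℝ) ≤ C * β^(d+2) := by
  classical
  refine ⟨5^(d+2), by positivity, ?_⟩
  intro e α r β Λ he hα hα2 hr hr1 hβ hΛ hsep x hx hgx
  have hπ := Real.pi_pos
  set Φ := Λ.filter (fun ω => rhoCap e α ω x ≤ β * r) with hΦ
  set g : EuclideanSpace ℝ (Fin (d+1)) → ℝ :=
    fun a => Real.sqrt α * Real.sqrt (α - geo a e) with hg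
  -- basic facts about the extra coordinate
  have hgsq : ∀ a b, (g a - g b) ^ 2 =
      α * (Real.sqrt (α - geo a e) - Real.sqrt (α - geo b e)) ^ 2 := by
    intro a b
    have : g a - g b = Real.sqrt α * (Real.sqrt (α - geo a e) - Real.sqrt (α - geo b e)) := by
      simp [hg]; ring
    rw [this, mul_pow, Real.sq_sqrt hα.le]
  have hrho : ∀ a b, Real.sqrt ((geo a b) ^ 2 +
      α * (Real.sqrt (α - geo a e) - Real.sqrt (α - geo b e)) ^ 2) = α * rhoCap e α a b := by
    intro a b
    rw [rhoCap]
    field_simp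
  have hrho_nonneg : ∀ a b, 0 ≤ rhoCap e α a b := by
    intro a b
    rw [rhoCap]
    positivity
  -- the lifted set
  set s : Finset (EuclideanSpace ℝ (Fin (d+2))) := Φ.image (lift g) with hs
  have hinj : ∀ a b : EuclideanSpace ℝ (Fin (d+1)), lift g a = lift g b → a = b := by
    intro a b hab
    have h0 : dist (lift g a) (lift g b) = 0 := by rw [hab, dist_self]
    have h1 := lift_dist_sq g a b
    rw [h0] at h1
    have : dist a b ^ 2 ≤ 0 := by nlinarith [sq_nonneg (g a - g b)]
    have : dist a b = 0 := by nlinarith [dist_nonneg (x := a) (y := b)]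
    exact dist_eq_zero.1 this
  have hcard : (s.card : ℝ) = (Φ.card : ℝ) := by
    rw [hs, Finset.card_image_of_injOn fun a _ b _ h => hinj a b h]
  -- membership: the lifted points lie in a ball of radius α·β·r around lift g x
  have hmem : ∀ p ∈ s, dist p (lift g x) ≤ α * (β * r) := by
    intro p hp
    rcases Finset.mem_image.1 hp with ⟨ω, hω, rfl⟩
    rcases Finset.mem_filter.1 hω with ⟨hωΛ, hωx⟩
    have hω1 := (hΛ ω hωΛ).1
    have key : dist (lift g ω) (lift g x) ^ 2 ≤ (α * rhoCap e α ω x) ^ 2 := by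
      rw [lift_dist_sq, hgsq, ← hrho ω x, Real.sq_sqrt (by positivity)]
      have := dist_le_geo hω1 hx
      nlinarith [dist_nonneg (x := ω) (y := x), geo_nonneg ω x]
    have h2 : α * rhoCap e α ω x ≤ α * (β * r) :=
      mul_le_mul_of_nonneg_left hωx hα.le
    refine le_of_sq_le_sq' dist_nonneg (by positivity) (key.trans ?_)
    have h3 : 0 ≤ α * rhoCap e α ω x := mul_nonneg hα.le (hrho_nonneg ω x)
    nlinarith
  -- separation of the lifted points
  have hsep' : ∀ p ∈ s, ∀ q ∈ s, p ≠ q → 2 / π * (α * r) ≤ dist p q := by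
    intro p hp q hq hpq
    rcases Finset.mem_image.1 hp with ⟨ω, hω, rfl⟩
    rcases Finset.mem_image.1 hq with ⟨ω', hω', rfl⟩
    have hne : ω ≠ ω' := fun h => hpq (by rw [h])
    have hωΛ := (Finset.mem_filter.1 hω).1
    have hω'Λ := (Finset.mem_filter.1 hω').1
    have h1 := (hΛ ω hωΛ).1
    have h1' := (hΛ ω' hω'Λ).1
    have hsepr := hsep ω hωΛ ω' hω'Λ hne
    have har : α * r ≤ α * rhoCap e α ω ω' := mul_le_mul_of_nonneg_left hsepr hα.le
    rw [← hrho ω ω'] at har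
    -- compare under the square root
    have hgeo := geo_le_dist h1 h1'
    have hsq : (geo ω ω') ^ 2 +
        α * (Real.sqrt (α - geo ω e) - Real.sqrt (α - geo ω' e)) ^ 2 ≤
        (π/2) ^ 2 * (dist ω ω' ^ 2 + (g ω - g ω') ^ 2) := by
      rw [hgsq]
      have hπ1 : (1:ℝ) ≤ (π/2) ^ 2 := by nlinarith [Real.pi_gt_three]
      have hΔ : 0 ≤ α * (Real.sqrt (α - geo ω e) - Real.sqrt (α - geo ω' e)) ^ 2 := by
        positivity
      nlinarith [geo_nonneg ω ω', dist_nonneg (x := ω) (y := ω')]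
    have hsqrt : Real.sqrt ((geo ω ω') ^ 2 +
        α * (Real.sqrt (α - geo ω e) - Real.sqrt (α - geo ω' e)) ^ 2) ≤
        π/2 * dist (lift g ω) (lift g ω') := by
      calc Real.sqrt ((geo ω ω') ^ 2 +
          α * (Real.sqrt (α - geo ω e) - Real.sqrt (α - geo ω' e)) ^ 2)
          ≤ Real.sqrt ((π/2) ^ 2 * (dist ω ω' ^ 2 + (g ω - g ω') ^ 2)) :=
            Real.sqrt_le_sqrt hsq
        _ = π/2 * Real.sqrt (dist ω ω' ^ 2 + (g ω - g ω') ^ 2) := by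
            rw [Real.sqrt_mul (by positivity), Real.sqrt_sq (by positivity)]
        _ = π/2 * dist (lift g ω) (lift g ω') := by rw [lift_dist]
    have : α * r ≤ π/2 * dist (lift g ω) (lift g ω') := le_trans har hsqrt
    rw [div_mul_eq_mul_div, div_le_iff₀ (by positivity : (0:ℝ) < π)]
    linarith
  -- apply the packing bound
  have hδ : (0:ℝ) < 2 / π * (α * r) := by positivity
  have hR0 : (0:ℝ) ≤ α * (β * r) := by positivity
  have hpack := packing_bound s (lift g x) hδ hR0 hmem hsep'
  rw [finrank_euclideanSpace_fin] at hpack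
  have hcard' : (Φ.card : ℝ) * (2 / π * (α * r) / 2) ^ (d + 2) ≤
      (α * (β * r) + 2 / π * (α * r) / 2) ^ (d + 2) := by
    rw [← hcard]; exact hpack
  -- now basic algebra: R + δ/2 ≤ 5β · (δ/2)
  have hhalf : (0:ℝ) < 2 / π * (α * r) / 2 := by positivity
  have hstep : α * (β * r) + 2 / π * (α * r) / 2 ≤ 5 * β * (2 / π * (α * r) / 2) := by
    have hπ4 := Real.pi_le_four
    have h1 : α * (β * r) * π + (α * r) ≤ 5 * β * (α * r) := by
      nlinarith [mul_pos hα hr, mul_nonneg (mul_nonneg hα.le hr.le) (sub_nonneg.2 hβ)]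
    rw [show 2 / π * (α * r) / 2 = α * r / π by ring, ← sub_nonneg]
    have heq : 5 * β * (α * r / π) - (α * (β * r) + α * r / π) =
        (5 * β * (α * r) - (α * (β * r) * π + α * r)) / π := by
      field_simp
    rw [heq]
    exact div_nonneg (by linarith) hπ.le
  have hfinal : (Φ.card : ℝ) * (2 / π * (α * r) / 2) ^ (d + 2) ≤
      (5 * β) ^ (d + 2) * (2 / π * (α * r) / 2) ^ (d + 2) := by
    calc (Φ.card : ℝ) * (2 / π * (α * r) / 2) ^ (d + 2)
        ≤ (α * (β * r) + 2 / π * (α * r) / 2) ^ (d + 2) := hcard'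
      _ ≤ (5 * β * (2 / π * (α * r) / 2)) ^ (d + 2) := by
          exact pow_le_pow_left₀ (by positivity) hstep _
      _ = (5 * β) ^ (d + 2) * (2 / π * (α * r) / 2) ^ (d + 2) := by rw [mul_pow]
  have := le_of_mul_le_mul_right hfinal (by positivity : (0:ℝ) < (2 / π * (α * r) / 2) ^ (d + 2))
  calc (Φ.card : ℝ) ≤ (5 * β) ^ (d + 2) := this
    _ = 5 ^ (d + 2) * β ^ (d + 2) := mul_pow 5 β (d + 2)
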